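/- (Direct-sum majorization entropic uncertainty relation, Rényi case) For any density matrix ρ, any d×d unitary matrix U relating two orthonormal bases, the induced probability vectors p and q, and any α with 0 < α < 1, one has H_α(p) + H_α(q) ≥ H_α(W), where W = (s₁, s₂−s₁, …, s_d−s_{d−1}). -/

import Mathlib

open scoped BigOperators Matrix ComplexConjugate ComplexOrder

/-- Shannon entropy of a finite real vector (natural logarithm). -/
noncomputable def shannonEntropy {n : Type*} [Fintype n] (x : n → ℝ) : ℝ :=
  -∑ i, x i * Real.log (x i)

/-- Von Neumann entropy of a Hermitian matrix, `-∑ λᵢ ln λᵢ`. -/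
noncomputable def vonNeumannEntropy {d : ℕ} {ρ : Matrix (Fin d) (Fin d) ℂ}
    (hρ : ρ.IsHermitian) : ℝ :=
  -∑ i, hρ.eigenvalues i * Real.log (hρ.eigenvalues i)

/-- Rényi entropy of order `α ≠ 1` (natural logarithm). -/
noncomputable def renyiEntropy {n : Type*} [Fintype n] (α : ℝ) (x : n → ℝ) : ℝ :=
  (1 / (1 - α)) * Real.log (∑ i, x i ^ α)

/-- The operator norm (largest singular value) of the submatrix of `U` with rows `I`
and columns `J`, expressed as the supremum of `|⟨x, U y⟩|` over unit vectors supported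
on `I` resp. `J`. -/
noncomputable def subOpNorm {d : ℕ} (U : Matrix (Fin d) (Fin d) ℂ)
    (I J : Finset (Fin d)) : ℝ :=
  sSup { r : ℝ | ∃ (x : I → ℂ) (y : J → ℂ),
    (∑ i, ‖x i‖ ^ 2 = 1) ∧ (∑ j, ‖y j‖ ^ 2 = 1) ∧
    r = ‖∑ i : I, ∑ j : J, (starRingEnd ℂ) (x i) * U i.1 j.1 * y j‖ }

/-- `sCoef U k` is the coefficient `s_k`: the maximal operator norm of a submatrix of `U`
of class `k`, i.e. with `#rows + #cols = k + 1` (for `k = 0` the set is empty and the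
supremum equals `0`). -/
noncomputable def sCoef {d : ℕ} (U : Matrix (Fin d) (Fin d) ℂ) (k : ℕ) : ℝ :=
  sSup { r : ℝ | ∃ I J : Finset (Fin d), I.Nonempty ∧ J.Nonempty ∧
    I.card + J.card = k + 1 ∧ r = subOpNorm U I J }

/-- The vector `W = (s₁, s₂ - s₁, …, s_d - s_{d-1})`. -/
noncomputable def Wvec {d : ℕ} (U : Matrix (Fin d) (Fin d) ℂ) : Fin d → ℝ :=
  fun k => sCoef U (k.val + 1) - (if k.val = 0 then 0 else sCoef U k.val)


set_option maxHeartbeats 1000000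

namespace EUR
open MeasureTheory Set

variable {d : ℕ} {U : Matrix (Fin d) (Fin d) ℂ} {α : ℝ}

noncomputable def ext (I : Finset (Fin d)) (x : I → ℂ) : Fin d → ℂ :=
  fun i => if h : i ∈ I then x ⟨i, h⟩ else 0

lemma sum_ext {M : Type*} [AddCommMonoid M] (I : Finset (Fin d)) (x : I → ℂ)
    (F : Fin d → ℂ → M) (hF : ∀ i, F i 0 = 0) :
    ∑ i, F i (ext I x i) = ∑ i : I, F i.1 (x i) := by
  classical
  have h1 : ∑ i, F i (ext I x i) = ∑ i ∈ I, F i (ext I x i) :=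
    (Finset.sum_subset (Finset.subset_univ I)
      (fun i _ hi => by simp [ext, hi, hF])).symm
  rw [h1, ← Finset.sum_attach I (fun i => F i (ext I x i))]
  rw [Finset.univ_eq_attach]
  refine Finset.sum_congr rfl fun i _ => ?_
  simp [ext, i.2]

lemma norm_sq_eq (z : ℂ) : ‖z‖ ^ 2 = z.re ^ 2 + z.im ^ 2 := by
  rw [Complex.sq_norm, Complex.normSq_apply]; ring

lemma re_conj_mul_self (z : ℂ) : ((starRingEnd ℂ) z * z).re = ‖z‖ ^ 2 := by
  rw [norm_sq_eq, Complex.mul_re, Complex.conj_re, Complex.conj_im]; ring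

lemma norm_add_sq_complex (c e : ℂ) :
    ‖c + e‖ ^ 2 = ‖c‖ ^ 2 + ‖e‖ ^ 2 + 2 * ((starRingEnd ℂ) c * e).re := by
  rw [norm_sq_eq, norm_sq_eq, norm_sq_eq, Complex.add_re, Complex.add_im, Complex.mul_re,
    Complex.conj_re, Complex.conj_im]; ring

/-- Cauchy–Schwarz for complex sums. -/
lemma cs_complex {ι : Type*} (s : Finset ι) (f g : ι → ℂ) :
    ‖∑ i ∈ s, (starRingEnd ℂ) (f i) * g i‖ ≤
      Real.sqrt (∑ i ∈ s, ‖f i‖ ^ 2) * Real.sqrt (∑ i ∈ s, ‖g i‖ ^ 2) := by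
  have h1 : ‖∑ i ∈ s, (starRingEnd ℂ) (f i) * g i‖ ≤ ∑ i ∈ s, ‖f i‖ * ‖g i‖ := by
    refine (norm_sum_le _ _).trans (le_of_eq ?_)
    refine Finset.sum_congr rfl fun i _ => ?_
    rw [norm_mul, RCLike.norm_conj]
  refine h1.trans ?_
  rw [← Real.sqrt_mul (Finset.sum_nonneg fun i _ => sq_nonneg _)]
  rw [show (∑ i ∈ s, ‖f i‖ * ‖g i‖) = Real.sqrt ((∑ i ∈ s, ‖f i‖ * ‖g i‖) ^ 2) from
    (Real.sqrt_sq (Finset.sum_nonneg fun i _ => mul_nonneg (norm_nonneg _) (norm_nonneg _))).symm]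
  exact Real.sqrt_le_sqrt (Finset.sum_mul_sq_le_sq_mul_sq s _ _)

/-- Unitarity preserves the ℓ² norm (coordinates version). -/
lemma mulVec_norm_sq {U : Matrix (Fin d) (Fin d) ℂ} (hU : U ∈ Matrix.unitaryGroup (Fin d) ℂ)
    (y : Fin d → ℂ) : ∑ i, ‖(U *ᵥ y) i‖ ^ 2 = ∑ j, ‖y j‖ ^ 2 := by
  have key : ∀ w : Fin d → ℂ, (dotProduct (star w) w).re = ∑ i, ‖w i‖ ^ 2 := by
    intro w
    rw [dotProduct, Complex.re_sum]
    exact Finset.sum_congr rfl fun i _ => re_conj_mul_self (w i)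
  have h2 : dotProduct (star (U *ᵥ y)) (U *ᵥ y) = dotProduct (star y) y := by
    rw [Matrix.star_mulVec, Matrix.dotProduct_mulVec, Matrix.vecMul_vecMul]
    have : Uᴴ * U = 1 := by
      have := hU.1
      rwa [Matrix.star_eq_conjTranspose] at this
    rw [this, Matrix.vecMul_one]
  rw [← key, ← key, h2]


/-- Every element of the `subOpNorm` set is at most 1. -/
lemma subOpNorm_set_le_one (hU : U ∈ Matrix.unitaryGroup (Fin d) ℂ) (I J : Finset (Fin d))
    {r : ℝ} (hr : r ∈ { r : ℝ | ∃ (x : I → ℂ) (y : J → ℂ),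
      (∑ i, ‖x i‖ ^ 2 = 1) ∧ (∑ j, ‖y j‖ ^ 2 = 1) ∧
      r = ‖∑ i : I, ∑ j : J, (starRingEnd ℂ) (x i) * U i.1 j.1 * y j‖ }) : r ≤ 1 := by
  obtain ⟨x, y, hx, hy, rfl⟩ := hr
  set z : Fin d → ℂ := U *ᵥ ext J y with hz
  have hinner : ∀ i : I, ∑ j : J, (starRingEnd ℂ) (x i) * U i.1 j.1 * y j
      = (starRingEnd ℂ) (x i) * z i.1 := by
    intro i
    have : z i.1 = ∑ j : J, U i.1 j.1 * y j := by
      rw [hz]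
      show (∑ j, U i.1 j * ext J y j) = _
      exact sum_ext J y (fun j c => U i.1 j * c) (fun j => mul_zero _)
    rw [this, Finset.mul_sum]
    exact Finset.sum_congr rfl fun j _ => by ring
  calc ‖∑ i : I, ∑ j : J, (starRingEnd ℂ) (x i) * U i.1 j.1 * y j‖
      = ‖∑ i : I, (starRingEnd ℂ) (x i) * z i.1‖ := by
        congr 1; exact Finset.sum_congr rfl fun i _ => hinner i
    _ ≤ Real.sqrt (∑ i : I, ‖x i‖ ^ 2) * Real.sqrt (∑ i : I, ‖z i.1‖ ^ 2) :=
        cs_complex Finset.univ x (fun i => z i.1)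
    _ ≤ 1 := by
        rw [hx, Real.sqrt_one, one_mul]
        have h1 : ∑ i : I, ‖z i.1‖ ^ 2 ≤ ∑ i, ‖z i‖ ^ 2 := by
          rw [Finset.univ_eq_attach, Finset.sum_attach I (fun i => ‖z i‖ ^ 2)]
          exact Finset.sum_le_sum_of_subset_of_nonneg (Finset.subset_univ I)
            (fun i _ _ => sq_nonneg _)
        have h2 : ∑ i, ‖z i‖ ^ 2 = 1 := by
          rw [hz, mulVec_norm_sq hU]
          rw [show (∑ j, ‖ext J y j‖ ^ 2) = ∑ j : J, ‖y j‖ ^ 2 from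
            sum_ext J y (fun j c => ‖c‖ ^ 2) (fun j => by simp)]
          exact hy
        calc Real.sqrt (∑ i : I, ‖z i.1‖ ^ 2) ≤ Real.sqrt 1 :=
              Real.sqrt_le_sqrt (h1.trans_eq h2)
          _ = 1 := Real.sqrt_one

lemma subOpNorm_nonneg (I J : Finset (Fin d)) : 0 ≤ subOpNorm U I J :=
  Real.sSup_nonneg (fun r hr => by obtain ⟨x, y, _, _, rfl⟩ := hr; exact norm_nonneg _)

lemma subOpNorm_le_one (hU : U ∈ Matrix.unitaryGroup (Fin d) ℂ) (I J : Finset (Fin d)) :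
    subOpNorm U I J ≤ 1 :=
  Real.sSup_le (fun r hr => subOpNorm_set_le_one hU I J hr) zero_le_one

lemma subOpNorm_bddAbove (hU : U ∈ Matrix.unitaryGroup (Fin d) ℂ) (I J : Finset (Fin d)) :
    BddAbove { r : ℝ | ∃ (x : I → ℂ) (y : J → ℂ),
      (∑ i, ‖x i‖ ^ 2 = 1) ∧ (∑ j, ‖y j‖ ^ 2 = 1) ∧
      r = ‖∑ i : I, ∑ j : J, (starRingEnd ℂ) (x i) * U i.1 j.1 * y j‖ } :=
  ⟨1, fun r hr => subOpNorm_set_le_one hU I J hr⟩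

lemma sCoef_nonneg (k : ℕ) : 0 ≤ sCoef U k :=
  Real.sSup_nonneg (fun r hr => by
    obtain ⟨I, J, _, _, _, rfl⟩ := hr; exact subOpNorm_nonneg I J)

lemma sCoef_le_one (hU : U ∈ Matrix.unitaryGroup (Fin d) ℂ) (k : ℕ) : sCoef U k ≤ 1 :=
  Real.sSup_le (fun r hr => by
    obtain ⟨I, J, _, _, _, rfl⟩ := hr; exact subOpNorm_le_one hU I J) zero_le_one

lemma sCoef_zero : sCoef U 0 = 0 := by
  rw [sCoef]
  convert Real.sSup_empty
  rw [Set.eq_empty_iff_forall_notMem]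
  rintro r ⟨I, J, hI, hJ, hcard, -⟩
  have := Finset.card_pos.2 hI
  have := Finset.card_pos.2 hJ
  omega

lemma subOpNorm_le_sCoef (hU : U ∈ Matrix.unitaryGroup (Fin d) ℂ) {I J : Finset (Fin d)}
    (hI : I.Nonempty) (hJ : J.Nonempty) :
    subOpNorm U I J ≤ sCoef U (I.card + J.card - 1) := by
  apply le_csSup
  · exact ⟨1, fun r hr => by
      obtain ⟨I', J', _, _, _, rfl⟩ := hr; exact subOpNorm_le_one hU I' J'⟩
  · refine ⟨I, J, hI, hJ, ?_, rfl⟩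
    have := Finset.card_pos.2 hI
    have := Finset.card_pos.2 hJ
    omega


lemma sum_extend {M : Type*} [AddCommMonoid M] {I I' : Finset (Fin d)} (h : I ⊆ I')
    (x : I → ℂ) (F : Fin d → ℂ → M) (hF : ∀ i, F i 0 = 0) :
    ∑ i : I', F i.1 (ext I x i.1) = ∑ i : I, F i.1 (x i) := by
  have he : ext I' (fun i : I' => ext I x i.1) = ext I x := by
    funext i
    by_cases h1 : i ∈ I'
    · simp [ext, h1]
    · have h2 : i ∉ I := fun hi => h1 (h hi)
      simp [ext, h1, h2]
  calc ∑ i : I', F i.1 (ext I x i.1)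
      = ∑ i, F i (ext I' (fun i : I' => ext I x i.1) i) :=
        (sum_ext I' (fun i : I' => ext I x i.1) F hF).symm
    _ = ∑ i, F i (ext I x i) := by rw [he]
    _ = ∑ i : I, F i.1 (x i) := sum_ext I x F hF

lemma subOpNorm_mono_left (hU : U ∈ Matrix.unitaryGroup (Fin d) ℂ)
    {I I' : Finset (Fin d)} (h : I ⊆ I') (J : Finset (Fin d)) :
    subOpNorm U I J ≤ subOpNorm U I' J := by
  apply Real.sSup_le _ (subOpNorm_nonneg I' J)
  rintro r ⟨x, y, hx, hy, rfl⟩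
  apply le_csSup (subOpNorm_bddAbove hU I' J)
  refine ⟨fun i : I' => ext I x i.1, y, ?_, hy, ?_⟩
  · rw [show (∑ i : I', ‖ext I x i.1‖ ^ 2) = ∑ i : I, ‖x i‖ ^ 2 from
      sum_extend h x (fun _ c => ‖c‖ ^ 2) (fun _ => by simp)]
    exact hx
  · congr 1
    exact (sum_extend h x
      (fun i c => ∑ j : J, (starRingEnd ℂ) c * U i j.1 * y j)
      (fun i => by simp)).symm

lemma subOpNorm_mono_right (hU : U ∈ Matrix.unitaryGroup (Fin d) ℂ)
    (I : Finset (Fin d)) {J J' : Finset (Fin d)} (h : J ⊆ J') :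
    subOpNorm U I J ≤ subOpNorm U I J' := by
  apply Real.sSup_le _ (subOpNorm_nonneg I J')
  rintro r ⟨x, y, hx, hy, rfl⟩
  apply le_csSup (subOpNorm_bddAbove hU I J')
  refine ⟨x, fun j : J' => ext J y j.1, hx, ?_, ?_⟩
  · rw [show (∑ j : J', ‖ext J y j.1‖ ^ 2) = ∑ j : J, ‖y j‖ ^ 2 from
      sum_extend h y (fun _ c => ‖c‖ ^ 2) (fun _ => by simp)]
    exact hy
  · rw [Finset.sum_comm, Finset.sum_comm (γ := ↥I)]
    congr 1
    exact (sum_extend h y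
      (fun j c => ∑ i : I, (starRingEnd ℂ) (x i) * U i.1 j * c)
      (fun j => by simp)).symm

lemma sCoef_mono (hU : U ∈ Matrix.unitaryGroup (Fin d) ℂ) {k : ℕ} (hk : k + 2 ≤ 2 * d) :
    sCoef U k ≤ sCoef U (k + 1) := by
  apply Real.sSup_le _ (sCoef_nonneg (k + 1))
  rintro r ⟨I, J, hI, hJ, hc, rfl⟩
  have hIu : I.card ≤ d := by simpa using Finset.card_le_univ I
  have hJu : J.card ≤ d := by simpa using Finset.card_le_univ J
  have hbdd : BddAbove { r : ℝ | ∃ I J : Finset (Fin d), I.Nonempty ∧ J.Nonempty ∧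
      I.card + J.card = (k + 1) + 1 ∧ r = subOpNorm U I J } :=
    ⟨1, fun r hr => by obtain ⟨I', J', _, _, _, rfl⟩ := hr; exact subOpNorm_le_one hU I' J'⟩
  rcases lt_or_ge I.card d with hlt | hge
  · have hne : ¬ ∀ a : Fin d, a ∈ I := by
      intro he
      have : I = Finset.univ := Finset.eq_univ_iff_forall.2 he
      rw [this, Finset.card_univ, Fintype.card_fin] at hlt; omega
    push_neg at hne
    obtain ⟨a, ha⟩ := hne
    refine (subOpNorm_mono_left hU (Finset.subset_insert a I) J).trans ?_
    apply le_csSup hbdd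
    exact ⟨insert a I, J, (Finset.insert_nonempty a I), hJ,
      by rw [Finset.card_insert_of_notMem ha]; omega, rfl⟩
  · have hJlt : J.card < d := by omega
    have hne : ¬ ∀ a : Fin d, a ∈ J := by
      intro he
      have : J = Finset.univ := Finset.eq_univ_iff_forall.2 he
      rw [this, Finset.card_univ, Fintype.card_fin] at hJlt; omega
    push_neg at hne
    obtain ⟨a, ha⟩ := hne
    refine (subOpNorm_mono_right hU I (Finset.subset_insert a J)).trans ?_
    apply le_csSup hbdd
    exact ⟨I, insert a J, hI, (Finset.insert_nonempty a J),
      by rw [Finset.card_insert_of_notMem ha]; omega, rfl⟩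


lemma unit_bound (hU : U ∈ Matrix.unitaryGroup (Fin d) ℂ) (I J : Finset (Fin d))
    (v : Fin d → ℂ) (hv : ∑ i, ‖v i‖ ^ 2 = 1) :
    (∑ i ∈ I, ‖v i‖ ^ 2) + ∑ j ∈ J, ‖(Uᴴ *ᵥ v) j‖ ^ 2 ≤ 1 + subOpNorm U I J := by
  classical
  obtain ⟨w, hw⟩ : ∃ w, w = Uᴴ *ᵥ v := ⟨_, rfl⟩
  rw [← hw]
  obtain ⟨a, hadef⟩ : ∃ a, a = ∑ i ∈ I, ‖v i‖ ^ 2 := ⟨_, rfl⟩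
  obtain ⟨b, hbdef⟩ : ∃ b, b = ∑ j ∈ J, ‖w j‖ ^ 2 := ⟨_, rfl⟩
  obtain ⟨s, hsdef⟩ : ∃ s, s = subOpNorm U I J := ⟨_, rfl⟩
  rw [← hadef, ← hbdef, ← hsdef]
  have ha0 : 0 ≤ a := hadef ▸ Finset.sum_nonneg fun i _ => sq_nonneg _
  have hb0 : 0 ≤ b := hbdef ▸ Finset.sum_nonneg fun j _ => sq_nonneg _
  have hs0 : 0 ≤ s := hsdef ▸ subOpNorm_nonneg I J
  obtain ⟨vI, hvI⟩ : ∃ vI : Fin d → ℂ, vI = fun i => if i ∈ I then v i else 0 := ⟨_, rfl⟩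
  obtain ⟨wJ, hwJ⟩ : ∃ wJ : Fin d → ℂ, wJ = fun j => if j ∈ J then w j else 0 := ⟨_, rfl⟩
  obtain ⟨g, hg⟩ : ∃ g, g = U *ᵥ wJ := ⟨_, rfl⟩
  obtain ⟨T, hT⟩ : ∃ T : ℂ, T = ∑ i, (starRingEnd ℂ) (vI i) * g i := ⟨_, rfl⟩
  have hvIa : ∀ i, vI i = if i ∈ I then v i else 0 := fun i => by rw [hvI]
  have hwJa : ∀ j, wJ j = if j ∈ J then w j else 0 := fun j => by rw [hwJ]
  have f1 : (∑ i, ‖vI i‖ ^ 2) = a := by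
    rw [hadef, ← Finset.sum_subset (Finset.subset_univ I)
      (fun i _ hi => by simp [hvIa, if_neg hi])]
    exact Finset.sum_congr rfl fun i hi => by simp [hvIa, if_pos hi]
  have f1w : (∑ j, ‖wJ j‖ ^ 2) = b := by
    rw [hbdef, ← Finset.sum_subset (Finset.subset_univ J)
      (fun j _ hj => by simp [hwJa, if_neg hj])]
    exact Finset.sum_congr rfl fun j hj => by simp [hwJa, if_pos hj]
  have fg : (∑ i, ‖g i‖ ^ 2) = b := by rw [hg, mulVec_norm_sq hU, f1w]
  have hsw : star v ᵥ* U = star w := by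
    rw [hw, Matrix.star_mulVec, Matrix.conjTranspose_conjTranspose]
  have part1 : (∑ i, (starRingEnd ℂ) (v i) * vI i).re = a := by
    have h1 : ∀ i, (starRingEnd ℂ) (v i) * vI i = (starRingEnd ℂ) (vI i) * vI i := by
      intro i; by_cases hi : i ∈ I <;> simp [hvIa, hi]
    rw [show (∑ i, (starRingEnd ℂ) (v i) * vI i) = ∑ i, (starRingEnd ℂ) (vI i) * vI i from
      Finset.sum_congr rfl fun i _ => h1 i]
    rw [Complex.re_sum, ← f1]
    exact Finset.sum_congr rfl fun i _ => re_conj_mul_self (vI i)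
  have part2 : (∑ i, (starRingEnd ℂ) (v i) * g i).re = b := by
    have h2 : (∑ i, (starRingEnd ℂ) (v i) * g i) = dotProduct (star v) (U *ᵥ wJ) := by
      rw [hg, dotProduct]; rfl
    rw [h2, Matrix.dotProduct_mulVec, hsw]
    have h3 : dotProduct (star w) wJ = ∑ j, (starRingEnd ℂ) (wJ j) * wJ j := by
      rw [dotProduct]
      refine Finset.sum_congr rfl fun j _ => ?_
      by_cases hj : j ∈ J <;> simp [hwJa, hj]
    rw [h3, Complex.re_sum, ← f1w]
    exact Finset.sum_congr rfl fun j _ => re_conj_mul_self (wJ j)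
  have f3 : a + b = (∑ i, (starRingEnd ℂ) (v i) * (vI i + g i)).re := by
    have : (∑ i, (starRingEnd ℂ) (v i) * (vI i + g i))
        = (∑ i, (starRingEnd ℂ) (v i) * vI i) + ∑ i, (starRingEnd ℂ) (v i) * g i := by
      rw [← Finset.sum_add_distrib]
      exact Finset.sum_congr rfl fun i _ => by ring
    rw [this, Complex.add_re, part1, part2]
  have f4 : a + b ≤ Real.sqrt (∑ i, ‖vI i + g i‖ ^ 2) := by
    rw [f3]
    calc (∑ i, (starRingEnd ℂ) (v i) * (vI i + g i)).re
        ≤ ‖∑ i, (starRingEnd ℂ) (v i) * (vI i + g i)‖ := Complex.re_le_norm _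
      _ ≤ Real.sqrt (∑ i, ‖v i‖ ^ 2) * Real.sqrt (∑ i, ‖vI i + g i‖ ^ 2) :=
          cs_complex Finset.univ v (fun i => vI i + g i)
      _ = Real.sqrt (∑ i, ‖vI i + g i‖ ^ 2) := by rw [hv, Real.sqrt_one, one_mul]
  have f5 : (∑ i, ‖vI i + g i‖ ^ 2) = a + b + 2 * T.re := by
    have : ∀ i, ‖vI i + g i‖ ^ 2
        = ‖vI i‖ ^ 2 + ‖g i‖ ^ 2 + 2 * ((starRingEnd ℂ) (vI i) * g i).re :=
      fun i => norm_add_sq_complex _ _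
    rw [Finset.sum_congr rfl fun i _ => this i]
    rw [Finset.sum_add_distrib, Finset.sum_add_distrib, f1, fg]
    rw [hT, Complex.re_sum, Finset.mul_sum]
  have Teq : T = ∑ i ∈ I, ∑ j ∈ J, (starRingEnd ℂ) (v i) * U i j * w j := by
    have hgi : ∀ i, (starRingEnd ℂ) (vI i) * g i
        = ∑ j, (starRingEnd ℂ) (vI i) * U i j * wJ j := by
      intro i
      rw [hg, Matrix.mulVec, dotProduct, Finset.mul_sum]
      exact Finset.sum_congr rfl fun j _ => by ring
    rw [hT, Finset.sum_congr rfl fun i _ => hgi i]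
    rw [← Finset.sum_subset (Finset.subset_univ I)
      (fun i _ hi => by simp [hvIa, if_neg hi])]
    refine Finset.sum_congr rfl fun i hi => ?_
    rw [← Finset.sum_subset (Finset.subset_univ J)
      (fun j _ hj => by simp [hwJa, if_neg hj])]
    refine Finset.sum_congr rfl fun j hj => by simp [hvIa, hwJa, if_pos hi, if_pos hj]
  have f6 : ‖T‖ ≤ s * (Real.sqrt a * Real.sqrt b) := by
    rcases eq_or_lt_of_le ha0 with haz | hap
    · have hvz : ∀ i ∈ I, v i = 0 := by
        intro i hi
        have hsum0 : (∑ i ∈ I, ‖v i‖ ^ 2) = 0 := by rw [← hadef]; exact haz.symm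
        have := (Finset.sum_eq_zero_iff_of_nonneg (fun i _ => sq_nonneg ‖v i‖)).1 hsum0 i hi
        simpa using this
      have : T = 0 := by
        rw [Teq]
        exact Finset.sum_eq_zero fun i hi => Finset.sum_eq_zero fun j _ => by
          simp [hvz i hi]
      rw [this, norm_zero]
      exact mul_nonneg hs0 (mul_nonneg (Real.sqrt_nonneg a) (Real.sqrt_nonneg b))
    rcases eq_or_lt_of_le hb0 with hbz | hbp
    · have hwz : ∀ j ∈ J, w j = 0 := by
        intro j hj
        have hsum0 : (∑ j ∈ J, ‖w j‖ ^ 2) = 0 := by rw [← hbdef]; exact hbz.symm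
        have := (Finset.sum_eq_zero_iff_of_nonneg (fun j _ => sq_nonneg ‖w j‖)).1 hsum0 j hj
        simpa using this
      have : T = 0 := by
        rw [Teq]
        exact Finset.sum_eq_zero fun i _ => Finset.sum_eq_zero fun j hj => by
          simp [hwz j hj]
      rw [this, norm_zero]
      exact mul_nonneg hs0 (mul_nonneg (Real.sqrt_nonneg a) (Real.sqrt_nonneg b))
    · -- a > 0, b > 0
      obtain ⟨ra, hra⟩ : ∃ ra, ra = Real.sqrt a := ⟨_, rfl⟩
      obtain ⟨rb, hrb⟩ : ∃ rb, rb = Real.sqrt b := ⟨_, rfl⟩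
      rw [← hra, ← hrb]
      have hrap : 0 < ra := hra ▸ Real.sqrt_pos.2 hap
      have hrbp : 0 < rb := hrb ▸ Real.sqrt_pos.2 hbp
      obtain ⟨x, hx⟩ : ∃ x : I → ℂ, x = fun i => v i.1 / (ra : ℂ) := ⟨_, rfl⟩
      obtain ⟨y, hy⟩ : ∃ y : J → ℂ, y = fun j => w j.1 / (rb : ℂ) := ⟨_, rfl⟩
      have hxs : ∑ i : I, ‖x i‖ ^ 2 = 1 := by
        have : ∀ i : I, ‖x i‖ ^ 2 = ‖v i.1‖ ^ 2 / a := by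
          intro i
          rw [hx]
          simp only [norm_div, Complex.norm_real, Real.norm_eq_abs, abs_of_pos hrap, div_pow]
          rw [hra, Real.sq_sqrt ha0]
        rw [Finset.sum_congr rfl fun i _ => this i, ← Finset.sum_div]
        rw [Finset.univ_eq_attach, Finset.sum_attach I (fun i => ‖v i‖ ^ 2), ← hadef]
        exact div_self (ne_of_gt hap)
      have hys : ∑ j : J, ‖y j‖ ^ 2 = 1 := by
        have : ∀ j : J, ‖y j‖ ^ 2 = ‖w j.1‖ ^ 2 / b := by
          intro j
          rw [hy]
          simp only [norm_div, Complex.norm_real, Real.norm_eq_abs, abs_of_pos hrbp, div_pow]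
          rw [hrb, Real.sq_sqrt hb0]
        rw [Finset.sum_congr rfl fun j _ => this j, ← Finset.sum_div]
        rw [Finset.univ_eq_attach, Finset.sum_attach J (fun j => ‖w j‖ ^ 2), ← hbdef]
        exact div_self (ne_of_gt hbp)
      have hval : (∑ i : I, ∑ j : J, (starRingEnd ℂ) (x i) * U i.1 j.1 * y j)
          = T / ((ra : ℂ) * (rb : ℂ)) := by
        rw [Teq]
        rw [show (∑ i ∈ I, ∑ j ∈ J, (starRingEnd ℂ) (v i) * U i j * w j)
            = ∑ i : I, ∑ j : J, (starRingEnd ℂ) (v i.1) * U i.1 j.1 * w j.1 by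
          rw [Finset.univ_eq_attach, Finset.sum_attach I
            (fun i => ∑ j : J, (starRingEnd ℂ) (v i) * U i j.1 * w j.1)]
          refine Finset.sum_congr rfl fun i _ => ?_
          rw [Finset.univ_eq_attach, Finset.sum_attach J
            (fun j => (starRingEnd ℂ) (v i) * U i j * w j)]]
        rw [Finset.sum_div]
        refine Finset.sum_congr rfl fun i _ => ?_
        rw [Finset.sum_div]
        refine Finset.sum_congr rfl fun j _ => ?_
        rw [hx, hy]
        rw [map_div₀, Complex.conj_ofReal]
        field_simp
      have hmem : ‖T‖ / (ra * rb) ∈ { r : ℝ | ∃ (x : I → ℂ) (y : J → ℂ),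
          (∑ i, ‖x i‖ ^ 2 = 1) ∧ (∑ j, ‖y j‖ ^ 2 = 1) ∧
          r = ‖∑ i : I, ∑ j : J, (starRingEnd ℂ) (x i) * U i.1 j.1 * y j‖ } := by
        refine ⟨x, y, hxs, hys, ?_⟩
        rw [hval, norm_div]
        congr 1
        rw [show ((ra : ℂ) * (rb : ℂ)) = ((ra * rb : ℝ) : ℂ) by push_cast; ring]
        rw [Complex.norm_real, Real.norm_eq_abs, abs_of_pos (mul_pos hrap hrbp)]
      have hle := le_csSup (subOpNorm_bddAbove hU I J) hmem
      rw [div_le_iff₀ (mul_pos hrap hrbp)] at hle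
      rw [hsdef]
      exact hle
  -- combine
  have hab2 : 2 * Real.sqrt a * Real.sqrt b ≤ a + b := by
    nlinarith [sq_nonneg (Real.sqrt a - Real.sqrt b), Real.sq_sqrt ha0, Real.sq_sqrt hb0,
      Real.sqrt_nonneg a, Real.sqrt_nonneg b]
  have hM : (∑ i, ‖vI i + g i‖ ^ 2) ≤ (1 + s) * (a + b) := by
    rw [f5]
    have hTre : T.re ≤ ‖T‖ := Complex.re_le_norm T
    nlinarith [f6, hs0, Real.sqrt_nonneg a, Real.sqrt_nonneg b, hab2]
  have hM0 : (0:ℝ) ≤ (1 + s) * (a + b) := mul_nonneg (by linarith) (by linarith)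
  have hsq : (a + b) ^ 2 ≤ (1 + s) * (a + b) := by
    have h1 : a + b ≤ Real.sqrt ((1 + s) * (a + b)) :=
      f4.trans (Real.sqrt_le_sqrt hM)
    calc (a + b) ^ 2 ≤ Real.sqrt ((1 + s) * (a + b)) ^ 2 := by
          apply pow_le_pow_left₀ (by linarith) h1
      _ = (1 + s) * (a + b) := Real.sq_sqrt hM0
  rcases eq_or_lt_of_le (by linarith : (0:ℝ) ≤ a + b) with h0 | hpos
  · linarith
  · nlinarith


lemma diag_spectral (V : Matrix (Fin d) (Fin d) ℂ) (lam : Fin d → ℝ) (i j : Fin d) :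
    ((V * Matrix.diagonal (Complex.ofReal ∘ lam) * Vᴴ) i j).re
      = ∑ m, lam m * ((starRingEnd ℂ) (V j m) * V i m).re := by
  rw [Matrix.mul_apply, Complex.re_sum]
  refine Finset.sum_congr rfl fun m _ => ?_
  rw [Matrix.mul_diagonal, Matrix.conjTranspose_apply]
  have : V i m * (Complex.ofReal ∘ lam) m * star (V j m)
      = (lam m : ℂ) * ((starRingEnd ℂ) (V j m) * V i m) := by
    simp only [Function.comp_apply, Complex.star_def]; ring
  rw [this]
  rw [show ((lam m : ℂ) * ((starRingEnd ℂ) (V j m) * V i m)).re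
      = lam m * ((starRingEnd ℂ) (V j m) * V i m).re by
    rw [Complex.mul_re, Complex.ofReal_re, Complex.ofReal_im]; ring]

/-- Key inequality: for any index sets `I, J`,
`∑_{i∈I} p_i + ∑_{j∈J} q_j ≤ 1 + subOpNorm U I J`. -/
lemma sum_pq_le (hU : U ∈ Matrix.unitaryGroup (Fin d) ℂ)
    {ρ : Matrix (Fin d) (Fin d) ℂ} (hρ : ρ.PosSemidef) (hρtr : ρ.trace = 1)
    {p q : Fin d → ℝ}
    (hp : ∀ i, p i = (ρ i i).re)
    (hq : ∀ j, q j = ((Uᴴ * ρ * U) j j).re)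
    (I J : Finset (Fin d)) :
    (∑ i ∈ I, p i) + ∑ j ∈ J, q j ≤ 1 + subOpNorm U I J := by
  classical
  have hH : ρ.IsHermitian := hρ.1
  obtain ⟨V, hV, hspec⟩ : ∃ V : Matrix (Fin d) (Fin d) ℂ,
      V ∈ Matrix.unitaryGroup (Fin d) ℂ ∧
      ρ = V * Matrix.diagonal (Complex.ofReal ∘ hH.eigenvalues) * Vᴴ := by
    refine ⟨(Matrix.IsHermitian.eigenvectorUnitary hH : Matrix (Fin d) (Fin d) ℂ),
      (Matrix.IsHermitian.eigenvectorUnitary hH).2, ?_⟩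
    have := hH.spectral_theorem
    rw [Unitary.conjStarAlgAut_apply, Matrix.star_eq_conjTranspose] at this; exact this
  obtain ⟨lam, hlam⟩ : ∃ lam : Fin d → ℝ, lam = hH.eigenvalues := ⟨_, rfl⟩
  have hlam0 : ∀ m, 0 ≤ lam m := fun m => hlam ▸ hρ.eigenvalues_nonneg m
  rw [← hlam] at hspec
  -- columns of V are unit vectors
  have hcol : ∀ m, ∑ i, ‖V i m‖ ^ 2 = 1 := by
    intro m
    have h1 : Vᴴ * V = 1 := by
      have := hV.1; rwa [Matrix.star_eq_conjTranspose] at this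
    have h2 : (Vᴴ * V) m m = 1 := by rw [h1, Matrix.one_apply_eq]
    rw [Matrix.mul_apply] at h2
    have h3 := congrArg Complex.re h2
    rw [Complex.re_sum, Complex.one_re] at h3
    rw [← h3]
    exact Finset.sum_congr rfl fun i _ => by
      rw [Matrix.conjTranspose_apply, ← re_conj_mul_self (V i m), Complex.star_def]
  -- representation of p
  have rep_p : ∀ i, p i = ∑ m, lam m * ‖V i m‖ ^ 2 := by
    intro i
    rw [hp i, hspec, diag_spectral]
    exact Finset.sum_congr rfl fun m _ => by rw [re_conj_mul_self]
  -- representation of q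
  have rep_q : ∀ j, q j = ∑ m, lam m * ‖(Uᴴ *ᵥ (fun k => V k m)) j‖ ^ 2 := by
    intro j
    have hB : Uᴴ * ρ * U = (Uᴴ * V) * Matrix.diagonal (Complex.ofReal ∘ lam) * (Uᴴ * V)ᴴ := by
      rw [hspec, Matrix.conjTranspose_mul, Matrix.conjTranspose_conjTranspose]
      simp only [Matrix.mul_assoc]
    rw [hq j, hB, diag_spectral]
    refine Finset.sum_congr rfl fun m _ => ?_
    rw [re_conj_mul_self]
    congr 2
  -- sum of eigenvalues is one
  have htr : ∑ m, lam m = 1 := by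
    have h1 : ∑ i, p i = 1 := by
      have : ρ.trace = ∑ i, ρ i i := rfl
      rw [this] at hρtr
      have := congrArg Complex.re hρtr
      rw [Complex.re_sum, Complex.one_re] at this
      rw [← this]
      exact Finset.sum_congr rfl fun i _ => hp i
    rw [← h1]
    rw [show (∑ i, p i) = ∑ i, ∑ m, lam m * ‖V i m‖ ^ 2 from
      Finset.sum_congr rfl fun i _ => rep_p i]
    rw [Finset.sum_comm]
    exact Finset.sum_congr rfl fun m _ => by
      rw [← Finset.mul_sum, hcol m, mul_one]
  -- main computation
  have main : (∑ i ∈ I, p i) + ∑ j ∈ J, q j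
      = ∑ m, lam m * ((∑ i ∈ I, ‖V i m‖ ^ 2)
          + ∑ j ∈ J, ‖(Uᴴ *ᵥ (fun k => V k m)) j‖ ^ 2) := by
    rw [show (∑ i ∈ I, p i) = ∑ m, lam m * ∑ i ∈ I, ‖V i m‖ ^ 2 by
      rw [Finset.sum_congr rfl fun i (_ : i ∈ I) => rep_p i, Finset.sum_comm]
      exact Finset.sum_congr rfl fun m _ => (Finset.mul_sum _ _ _).symm]
    rw [show (∑ j ∈ J, q j) = ∑ m, lam m * ∑ j ∈ J, ‖(Uᴴ *ᵥ (fun k => V k m)) j‖ ^ 2 by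
      rw [Finset.sum_congr rfl fun j (_ : j ∈ J) => rep_q j, Finset.sum_comm]
      exact Finset.sum_congr rfl fun m _ => (Finset.mul_sum _ _ _).symm]
    rw [← Finset.sum_add_distrib]
    exact Finset.sum_congr rfl fun m _ => (mul_add _ _ _).symm
  rw [main]
  calc ∑ m, lam m * ((∑ i ∈ I, ‖V i m‖ ^ 2)
          + ∑ j ∈ J, ‖(Uᴴ *ᵥ (fun k => V k m)) j‖ ^ 2)
      ≤ ∑ m, lam m * (1 + subOpNorm U I J) := by
        refine Finset.sum_le_sum fun m _ => ?_
        exact mul_le_mul_of_nonneg_left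
          (unit_bound hU I J (fun k => V k m) (hcol m)) (hlam0 m)
    _ = 1 + subOpNorm U I J := by
        rw [← Finset.sum_mul, htr, one_mul]


lemma integrable_min_rpow (hα0 : 0 < α) (hα1 : α < 1) {t : ℝ} (ht : 0 ≤ t) :
    IntegrableOn (fun u => min t u * u ^ (α - 2)) (Set.Ioi (0:ℝ)) := by
  rcases eq_or_lt_of_le ht with htz | htp
  · have he : Set.EqOn (fun u => min t u * u ^ (α - 2)) 0 (Set.Ioi 0) := by
      intro u hu
      have : min t u = 0 := by rw [← htz]; exact min_eq_left (le_of_lt hu)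
      simp [this]
    exact (integrableOn_congr_fun he measurableSet_Ioi).2 (integrableOn_zero)
  · rw [(Set.Ioc_union_Ioi_eq_Ioi ht).symm]
    apply IntegrableOn.union
    · have he : Set.EqOn (fun u => min t u * u ^ (α - 2)) (fun u => u ^ (α - 1))
          (Set.Ioc 0 t) := by
        intro u hu
        have h1 : min t u = u := min_eq_right hu.2
        have h2 : u ^ (α - 1) = u * u ^ (α - 2) := by
          rw [show α - 1 = 1 + (α - 2) by ring, Real.rpow_add hu.1, Real.rpow_one]
        simp only [h1, h2]
      refine (integrableOn_congr_fun he measurableSet_Ioc).2 ?_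
      have h3 := intervalIntegral.intervalIntegrable_rpow' (a := 0) (b := t)
        (show (-1:ℝ) < α - 1 by linarith)
      rw [intervalIntegrable_iff, Set.uIoc_of_le ht] at h3
      exact h3
    · have he : Set.EqOn (fun u => min t u * u ^ (α - 2)) (fun u => t * u ^ (α - 2))
          (Set.Ioi t) := by
        intro u hu
        simp only [min_eq_left (le_of_lt (Set.mem_Ioi.1 hu))]
      refine (integrableOn_congr_fun he measurableSet_Ioi).2 ?_
      exact (integrableOn_Ioi_rpow_of_lt (by linarith) htp).const_mul t

lemma integral_min_rpow (hα0 : 0 < α) (hα1 : α < 1) {t : ℝ} (ht : 0 ≤ t) :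
    ∫ u in Set.Ioi (0:ℝ), min t u * u ^ (α - 2) = t ^ α / (α * (1 - α)) := by
  rcases eq_or_lt_of_le ht with htz | htp
  · have he : Set.EqOn (fun u => min t u * u ^ (α - 2)) 0 (Set.Ioi 0) := by
      intro u hu
      have : min t u = 0 := by rw [← htz]; exact min_eq_left (le_of_lt hu)
      simp [this]
    rw [setIntegral_congr_fun measurableSet_Ioi he]
    rw [← htz, Real.zero_rpow (ne_of_gt hα0)]
    simp
  · have hsplit : Set.Ioi (0:ℝ) = Set.Ioc 0 t ∪ Set.Ioi t := (Set.Ioc_union_Ioi_eq_Ioi ht).symm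
    have he1 : Set.EqOn (fun u => min t u * u ^ (α - 2)) (fun u => u ^ (α - 1))
        (Set.Ioc 0 t) := by
      intro u hu
      have h1 : min t u = u := min_eq_right hu.2
      have h2 : u ^ (α - 1) = u * u ^ (α - 2) := by
        rw [show α - 1 = 1 + (α - 2) by ring, Real.rpow_add hu.1, Real.rpow_one]
      simp only [h1, h2]
    have he2 : Set.EqOn (fun u => min t u * u ^ (α - 2)) (fun u => t * u ^ (α - 2))
        (Set.Ioi t) := by
      intro u hu
      simp only [min_eq_left (le_of_lt (Set.mem_Ioi.1 hu))]
    have hint1 : IntegrableOn (fun u => min t u * u ^ (α - 2)) (Set.Ioc 0 t) := by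
      refine (integrableOn_congr_fun he1 measurableSet_Ioc).2 ?_
      have h3 := intervalIntegral.intervalIntegrable_rpow' (a := 0) (b := t)
        (show (-1:ℝ) < α - 1 by linarith)
      rw [intervalIntegrable_iff, Set.uIoc_of_le ht] at h3
      exact h3
    have hint2 : IntegrableOn (fun u => min t u * u ^ (α - 2)) (Set.Ioi t) := by
      refine (integrableOn_congr_fun he2 measurableSet_Ioi).2 ?_
      exact (integrableOn_Ioi_rpow_of_lt (by linarith) htp).const_mul t
    rw [hsplit, setIntegral_union (Set.Ioc_disjoint_Ioi le_rfl) measurableSet_Ioi hint1 hint2]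
    have hv1 : ∫ u in Set.Ioc 0 t, min t u * u ^ (α - 2) = t ^ α / α := by
      rw [setIntegral_congr_fun measurableSet_Ioc he1]
      rw [← intervalIntegral.integral_of_le ht]
      rw [integral_rpow (Or.inl (by linarith : (-1:ℝ) < α - 1))]
      rw [show α - 1 + 1 = α by ring, Real.zero_rpow (ne_of_gt hα0)]
      ring
    have hv2 : ∫ u in Set.Ioi t, min t u * u ^ (α - 2) = t * (-t ^ (α - 1) / (α - 1)) := by
      rw [setIntegral_congr_fun measurableSet_Ioi he2]
      rw [MeasureTheory.integral_const_mul]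
      rw [integral_Ioi_rpow_of_lt (by linarith) htp]
      rw [show α - 2 + 1 = α - 1 by ring]
    rw [hv1, hv2]
    have hta : t * t ^ (α - 1) = t ^ α := by
      have h0 : 1 + (α - 1) = α := by ring
      calc t * t ^ (α - 1) = t ^ (1:ℝ) * t ^ (α - 1) := by rw [Real.rpow_one]
        _ = t ^ (1 + (α - 1)) := (Real.rpow_add htp 1 (α - 1)).symm
        _ = t ^ α := by rw [h0]
    have h2 : t * (-t ^ (α - 1) / (α - 1)) = -t ^ α / (α - 1) := by
      rw [← hta]; ring
    rw [h2]
    have hα1' : α - 1 ≠ 0 := by linarith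
    have hαn : α ≠ 0 := ne_of_gt hα0
    have h3 : α * (1 - α) ≠ 0 := ne_of_gt (mul_pos hα0 (by linarith))
    rw [div_add_div _ _ hαn hα1', div_eq_div_iff (by positivity) h3]
    ring


lemma FG (hd : 2 ≤ d) (p q : Fin d → ℝ) (f : ℕ → ℝ)
    (hp0 : ∀ i, 0 ≤ p i) (hq0 : ∀ j, 0 ≤ q j)
    (hp1 : ∑ i, p i = 1) (hq1 : ∑ j, q j = 1)
    (hf0 : f 0 = 0) (hfd : f d ≤ 1)
    (hkey : ∀ I J : Finset (Fin d), 1 ≤ I.card + J.card →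
      (∑ i ∈ I, p i) + ∑ j ∈ J, q j ≤ 1 + f (I.card + J.card - 1))
    {u : ℝ} (hu : 0 < u) :
    min 1 u + ∑ k ∈ Finset.range d, min (f (k + 1) - f k) u
      ≤ (∑ i, min (p i) u) + ∑ j, min (q j) u := by
  classical
  obtain ⟨I, hI⟩ : ∃ I, I = Finset.univ.filter (fun i => u ≤ p i) := ⟨_, rfl⟩
  obtain ⟨J, hJ⟩ : ∃ J, J = Finset.univ.filter (fun j => u ≤ q j) := ⟨_, rfl⟩
  -- F-side computations
  have hFp : (∑ i, min (p i) u) = I.card * u + (1 - ∑ i ∈ I, p i) := by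
    rw [← Finset.sum_filter_add_sum_filter_not Finset.univ (fun i => u ≤ p i)
      (fun i => min (p i) u)]
    have e1 : ∑ i ∈ Finset.univ.filter (fun i => u ≤ p i), min (p i) u
        = I.card * u := by
      rw [Finset.sum_congr rfl (fun i hi => min_eq_right (Finset.mem_filter.1 hi).2),
        Finset.sum_const, nsmul_eq_mul, hI]
    have e2 : ∑ i ∈ Finset.univ.filter (fun i => ¬ u ≤ p i), min (p i) u
        = 1 - ∑ i ∈ I, p i := by
      rw [Finset.sum_congr rfl (fun i hi =>
        min_eq_left (le_of_lt (lt_of_not_ge (Finset.mem_filter.1 hi).2)))]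
      have h2 := Finset.sum_filter_add_sum_filter_not Finset.univ (fun i => u ≤ p i) p
      rw [hp1] at h2
      rw [hI]
      linarith
    rw [e1, e2]
  have hFq : (∑ j, min (q j) u) = J.card * u + (1 - ∑ j ∈ J, q j) := by
    rw [← Finset.sum_filter_add_sum_filter_not Finset.univ (fun j => u ≤ q j)
      (fun j => min (q j) u)]
    have e1 : ∑ j ∈ Finset.univ.filter (fun j => u ≤ q j), min (q j) u
        = J.card * u := by
      rw [Finset.sum_congr rfl (fun j hj => min_eq_right (Finset.mem_filter.1 hj).2),
        Finset.sum_const, nsmul_eq_mul, hJ]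
    have e2 : ∑ j ∈ Finset.univ.filter (fun j => ¬ u ≤ q j), min (q j) u
        = 1 - ∑ j ∈ J, q j := by
      rw [Finset.sum_congr rfl (fun j hj =>
        min_eq_left (le_of_lt (lt_of_not_ge (Finset.mem_filter.1 hj).2)))]
      have h2 := Finset.sum_filter_add_sum_filter_not Finset.univ (fun j => u ≤ q j) q
      rw [hq1] at h2
      rw [hJ]
      linarith
    rw [e1, e2]
  have hIple : (∑ i ∈ I, p i) ≤ 1 := by
    rw [← hp1]
    exact Finset.sum_le_sum_of_subset_of_nonneg (Finset.subset_univ I) (fun i _ _ => hp0 i)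
  have hJqle : (∑ j ∈ J, q j) ≤ 1 := by
    rw [← hq1]
    exact Finset.sum_le_sum_of_subset_of_nonneg (Finset.subset_univ J) (fun j _ _ => hq0 j)
  rcases Nat.eq_zero_or_pos (I.card + J.card) with hm0 | hm1
  · -- m = 0 : I and J empty
    have hIe : I = ∅ := Finset.card_eq_zero.1 (by omega)
    have hJe : J = ∅ := Finset.card_eq_zero.1 (by omega)
    have hF : (∑ i, min (p i) u) + ∑ j, min (q j) u = 2 := by
      rw [hFp, hFq, hIe, hJe]; simp; norm_num
    have hG : min 1 u + ∑ k ∈ Finset.range d, min (f (k + 1) - f k) u ≤ 2 := by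
      have h1 : min 1 u ≤ 1 := min_le_left _ _
      have h2 : ∑ k ∈ Finset.range d, min (f (k + 1) - f k) u
          ≤ ∑ k ∈ Finset.range d, (f (k + 1) - f k) :=
        Finset.sum_le_sum fun k _ => min_le_left _ _
      rw [Finset.sum_range_sub f d, hf0] at h2
      linarith
    linarith
  · -- m ≥ 1
    have hkeym := hkey I J hm1
    rcases le_or_gt (I.card + J.card) (d + 1) with hmd | hmd
    · -- 1 ≤ m ≤ d + 1
      obtain ⟨m', hm'⟩ : ∃ m', m' = I.card + J.card - 1 := ⟨_, rfl⟩
      have hm'd : m' ≤ d := by omega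
      have hsplit2 : ∑ k ∈ Finset.range d, min (f (k + 1) - f k) u
          = ∑ k ∈ Finset.range m', min (f (k + 1) - f k) u
            + ∑ k ∈ Finset.Ico m' d, min (f (k + 1) - f k) u := by
        rw [Finset.range_eq_Ico, ← Finset.sum_Ico_consecutive _ (Nat.zero_le m') hm'd,
          ← Finset.range_eq_Ico]
      have hpart1 : ∑ k ∈ Finset.range m', min (f (k + 1) - f k) u ≤ m' * u := by
        calc ∑ k ∈ Finset.range m', min (f (k + 1) - f k) u
            ≤ ∑ _k ∈ Finset.range m', u := Finset.sum_le_sum fun k _ => min_le_right _ _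
          _ = m' * u := by rw [Finset.sum_const, Finset.card_range, nsmul_eq_mul]
      have hpart2 : ∑ k ∈ Finset.Ico m' d, min (f (k + 1) - f k) u ≤ f d - f m' := by
        calc ∑ k ∈ Finset.Ico m' d, min (f (k + 1) - f k) u
            ≤ ∑ k ∈ Finset.Ico m' d, (f (k + 1) - f k) :=
              Finset.sum_le_sum fun k _ => min_le_left _ _
          _ = f d - f m' := by
              rw [Finset.sum_Ico_eq_sub _ hm'd, Finset.sum_range_sub f,
                Finset.sum_range_sub f]
              ring
      have hmin1 : min 1 u ≤ u := min_le_right _ _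
      have hcast : (m' : ℝ) + 1 = (I.card : ℝ) + J.card := by
        have : m' + 1 = I.card + J.card := by omega
        exact_mod_cast congrArg (Nat.cast (R := ℝ)) this
      rw [← hm'] at hkeym
      rw [hFp, hFq]
      nlinarith [hsplit2, hpart1, hpart2, hmin1, hu.le, hfd, hkeym, hcast]
    · -- m ≥ d + 2
      have hG : min 1 u + ∑ k ∈ Finset.range d, min (f (k + 1) - f k) u
          ≤ (d + 1) * u := by
        have h1 : min 1 u ≤ u := min_le_right _ _
        have h2 : ∑ k ∈ Finset.range d, min (f (k + 1) - f k) u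
            ≤ ∑ _k ∈ Finset.range d, u := Finset.sum_le_sum fun k _ => min_le_right _ _
        rw [Finset.sum_const, Finset.card_range, nsmul_eq_mul] at h2
        linarith
      have hcast : ((d : ℝ) + 2) ≤ (I.card : ℝ) + J.card := by
        have : d + 2 ≤ I.card + J.card := by omega
        exact_mod_cast this
      rw [hFp, hFq]
      nlinarith [hu.le, hG, hcast, hIple, hJqle]



lemma psd_diag_re_nonneg {A : Matrix (Fin d) (Fin d) ℂ} (hA : A.PosSemidef)
    (i : Fin d) : 0 ≤ (A i i).re := by
  have h := hA.re_dotProduct_nonneg (Pi.single i 1)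
  have he : dotProduct (star (Pi.single i 1)) (A *ᵥ (Pi.single i 1)) = A i i := by
    simp [dotProduct, Matrix.mulVec_single, Pi.single_apply]
  rw [he] at h
  simpa using h

lemma sum_repr {ι : Type*} (s : Finset ι) (hα0 : 0 < α) (hα1 : α < 1)
    (t : ι → ℝ) (ht : ∀ i ∈ s, 0 ≤ t i) :
    (∑ i ∈ s, t i ^ α)
      = (α * (1 - α)) * ∫ u in Set.Ioi (0:ℝ), ∑ i ∈ s, min (t i) u * u ^ (α - 2) := by
  rw [MeasureTheory.integral_finset_sum s
    (fun i hi => integrable_min_rpow hα0 hα1 (ht i hi))]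
  rw [Finset.mul_sum]
  refine Finset.sum_congr rfl fun i hi => ?_
  rw [integral_min_rpow hα0 hα1 (ht i hi)]
  have hc : α * (1 - α) ≠ 0 := ne_of_gt (mul_pos hα0 (by linarith))
  have h1α : 1 - α ≠ 0 := by linarith
  field_simp

lemma one_repr (hα0 : 0 < α) (hα1 : α < 1) :
    (1:ℝ) = (α * (1 - α)) * ∫ u in Set.Ioi (0:ℝ), min 1 u * u ^ (α - 2) := by
  rw [integral_min_rpow hα0 hα1 zero_le_one, Real.one_rpow]
  have hc : α * (1 - α) ≠ 0 := ne_of_gt (mul_pos hα0 (by linarith))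
  have h1α : 1 - α ≠ 0 := by linarith
  field_simp

end EUR

/-- **Direct-sum majorization entropic uncertainty relation (Rényi case, `0 < α < 1`)**:
`H_α(p) + H_α(q) ≥ H_α(W)` with `W = (s₁, s₂ - s₁, …, s_d - s_{d-1})`. -/
theorem stmt_7 (d : ℕ) (hd : 2 ≤ d)
    (U : Matrix (Fin d) (Fin d) ℂ) (hU : U ∈ Matrix.unitaryGroup (Fin d) ℂ)
    (ρ : Matrix (Fin d) (Fin d) ℂ) (hρ : ρ.PosSemidef) (hρtr : ρ.trace = 1)
    (p q : Fin d → ℝ)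
    (hp : ∀ i, p i = (ρ i i).re)
    (hq : ∀ j, q j = ((Uᴴ * ρ * U) j j).re)
    (α : ℝ) (hα0 : 0 < α) (hα1 : α < 1) :
    renyiEntropy α p + renyiEntropy α q ≥ renyiEntropy α (Wvec U) := by
  classical
  have h1α : (0:ℝ) < 1 - α := by linarith
  -- nonnegativity of p and q
  have hp0 : ∀ i, 0 ≤ p i := fun i => (hp i) ▸ EUR.psd_diag_re_nonneg hρ i
  have hσ : (Uᴴ * ρ * U).PosSemidef := hρ.conjTranspose_mul_mul_same U
  have hq0 : ∀ j, 0 ≤ q j := fun j => (hq j) ▸ EUR.psd_diag_re_nonneg hσ j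
  -- sums equal one
  have hp1 : ∑ i, p i = 1 := by
    have h2 : ρ.trace = ∑ i, ρ i i := rfl
    rw [h2] at hρtr
    have h3 := congrArg Complex.re hρtr
    rw [Complex.re_sum, Complex.one_re] at h3
    rw [← h3]
    exact Finset.sum_congr rfl fun i _ => hp i
  have hq1 : ∑ j, q j = 1 := by
    have hUU : U * Uᴴ = 1 := by
      have := hU.2; rwa [Matrix.star_eq_conjTranspose] at this
    have htr : (Uᴴ * ρ * U).trace = 1 := by
      rw [Matrix.trace_mul_cycle, hUU, one_mul, hρtr]
    have h2 : (Uᴴ * ρ * U).trace = ∑ j, (Uᴴ * ρ * U) j j := rfl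
    rw [h2] at htr
    have h3 := congrArg Complex.re htr
    rw [Complex.re_sum, Complex.one_re] at h3
    rw [← h3]
    exact Finset.sum_congr rfl fun j _ => hq j
  -- the key majorization-type inequality
  have hkey : ∀ I J : Finset (Fin d), 1 ≤ I.card + J.card →
      (∑ i ∈ I, p i) + ∑ j ∈ J, q j ≤ 1 + sCoef U (I.card + J.card - 1) := by
    intro I J hm
    rcases Finset.eq_empty_or_nonempty I with hIe | hIne
    · have h1 : ∑ i ∈ I, p i = 0 := by rw [hIe]; simp
      have h2 : ∑ j ∈ J, q j ≤ 1 := by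
        rw [← hq1]
        exact Finset.sum_le_sum_of_subset_of_nonneg (Finset.subset_univ J)
          (fun j _ _ => hq0 j)
      have h3 := EUR.sCoef_nonneg (U := U) (I.card + J.card - 1)
      linarith
    rcases Finset.eq_empty_or_nonempty J with hJe | hJne
    · have h1 : ∑ j ∈ J, q j = 0 := by rw [hJe]; simp
      have h2 : ∑ i ∈ I, p i ≤ 1 := by
        rw [← hp1]
        exact Finset.sum_le_sum_of_subset_of_nonneg (Finset.subset_univ I)
          (fun i _ _ => hp0 i)
      have h3 := EUR.sCoef_nonneg (U := U) (I.card + J.card - 1)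
      linarith
    · refine (EUR.sum_pq_le hU hρ hρtr hp hq I J).trans ?_
      have h3 := EUR.subOpNorm_le_sCoef hU hIne hJne
      linarith
  -- facts about W
  have hWf0 : ∀ k : ℕ, k < d → 0 ≤ sCoef U (k + 1) - sCoef U k := by
    intro k hk
    rcases Nat.eq_zero_or_pos k with rfl | hk1
    · rw [EUR.sCoef_zero, sub_zero]
      exact EUR.sCoef_nonneg (U := U) 1
    · have h3 := EUR.sCoef_mono hU (k := k) (by omega)
      linarith
  have hWvec_eq : ∀ k : Fin d, Wvec U k = sCoef U (k.val + 1) - sCoef U k.val := by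
    intro k
    rcases Nat.eq_zero_or_pos k.val with h0 | h1
    · show sCoef U (k.val + 1) - (if k.val = 0 then 0 else sCoef U k.val) = _
      rw [if_pos h0, h0, EUR.sCoef_zero]
    · show sCoef U (k.val + 1) - (if k.val = 0 then 0 else sCoef U k.val) = _
      rw [if_neg (by omega)]
  have hW0 : ∀ k : Fin d, 0 ≤ Wvec U k := fun k =>
    (hWvec_eq k) ▸ hWf0 k.val k.isLt
  -- analytic part
  have hc : (0:ℝ) < α * (1 - α) := mul_pos hα0 h1α
  have hint1 : MeasureTheory.IntegrableOn
      (fun u => min 1 u * u ^ (α - 2)) (Set.Ioi (0:ℝ)) :=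
    EUR.integrable_min_rpow hα0 hα1 zero_le_one
  have hint2 : MeasureTheory.IntegrableOn
      (fun u => ∑ k ∈ Finset.range d, min (sCoef U (k + 1) - sCoef U k) u * u ^ (α - 2))
      (Set.Ioi (0:ℝ)) :=
    MeasureTheory.integrable_finset_sum _
      (fun k hk => EUR.integrable_min_rpow hα0 hα1 (hWf0 k (Finset.mem_range.1 hk)))
  have hint3 : MeasureTheory.IntegrableOn
      (fun u => ∑ i, min (p i) u * u ^ (α - 2)) (Set.Ioi (0:ℝ)) :=
    MeasureTheory.integrable_finset_sum _
      (fun i _ => EUR.integrable_min_rpow hα0 hα1 (hp0 i))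
  have hint4 : MeasureTheory.IntegrableOn
      (fun u => ∑ j, min (q j) u * u ^ (α - 2)) (Set.Ioi (0:ℝ)) :=
    MeasureTheory.integrable_finset_sum _
      (fun j _ => EUR.integrable_min_rpow hα0 hα1 (hq0 j))
  have hmono : (∫ u in Set.Ioi (0:ℝ),
        (min 1 u * u ^ (α - 2)
          + ∑ k ∈ Finset.range d, min (sCoef U (k + 1) - sCoef U k) u * u ^ (α - 2)))
      ≤ ∫ u in Set.Ioi (0:ℝ),
        ((∑ i, min (p i) u * u ^ (α - 2)) + ∑ j, min (q j) u * u ^ (α - 2)) := by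
    refine MeasureTheory.setIntegral_mono_on (hint1.add hint2) (hint3.add hint4)
      measurableSet_Ioi ?_
    intro u hu
    have hu0 : (0:ℝ) < u := Set.mem_Ioi.1 hu
    have hFG := EUR.FG hd p q (sCoef U) hp0 hq0 hp1 hq1 EUR.sCoef_zero
      (EUR.sCoef_le_one hU d) hkey hu0
    have hw : (0:ℝ) ≤ u ^ (α - 2) := Real.rpow_nonneg hu0.le _
    calc min 1 u * u ^ (α - 2)
          + ∑ k ∈ Finset.range d, min (sCoef U (k + 1) - sCoef U k) u * u ^ (α - 2)
        = (min 1 u + ∑ k ∈ Finset.range d, min (sCoef U (k + 1) - sCoef U k) u)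
            * u ^ (α - 2) := by rw [add_mul, Finset.sum_mul]
      _ ≤ ((∑ i, min (p i) u) + ∑ j, min (q j) u) * u ^ (α - 2) :=
          mul_le_mul_of_nonneg_right hFG hw
      _ = (∑ i, min (p i) u * u ^ (α - 2)) + ∑ j, min (q j) u * u ^ (α - 2) := by
          rw [add_mul, Finset.sum_mul, Finset.sum_mul]
  -- convert to sums of powers
  have hAB : 1 + (∑ k ∈ Finset.range d, (sCoef U (k + 1) - sCoef U k) ^ α)
      ≤ (∑ i, p i ^ α) + ∑ j, q j ^ α := by
    have e1 := EUR.one_repr hα0 hα1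
    have e2 := EUR.sum_repr (Finset.range d) hα0 hα1
      (fun k => sCoef U (k + 1) - sCoef U k)
      (fun k hk => hWf0 k (Finset.mem_range.1 hk))
    have e3 := EUR.sum_repr Finset.univ hα0 hα1 p (fun i _ => hp0 i)
    have e4 := EUR.sum_repr Finset.univ hα0 hα1 q (fun j _ => hq0 j)
    have hadd1 := MeasureTheory.integral_add hint1 hint2
    have hadd2 := MeasureTheory.integral_add hint3 hint4
    calc 1 + (∑ k ∈ Finset.range d, (sCoef U (k + 1) - sCoef U k) ^ α)
        = (α * (1 - α)) * ∫ u in Set.Ioi (0:ℝ),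
            (min 1 u * u ^ (α - 2)
              + ∑ k ∈ Finset.range d, min (sCoef U (k + 1) - sCoef U k) u * u ^ (α - 2)) := by
          rw [hadd1, mul_add, ← e1, ← e2]
      _ ≤ (α * (1 - α)) * ∫ u in Set.Ioi (0:ℝ),
            ((∑ i, min (p i) u * u ^ (α - 2)) + ∑ j, min (q j) u * u ^ (α - 2)) :=
          mul_le_mul_of_nonneg_left hmono hc.le
      _ = (∑ i, p i ^ α) + ∑ j, q j ^ α := by
          rw [hadd2, mul_add, ← e3, ← e4]
  -- identify C
  have hC_eq : (∑ k, Wvec U k ^ α)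
      = ∑ k ∈ Finset.range d, (sCoef U (k + 1) - sCoef U k) ^ α := by
    rw [Finset.sum_congr rfl fun k _ => by rw [hWvec_eq k]]
    exact Fin.sum_univ_eq_sum_range (fun n => (sCoef U (n + 1) - sCoef U n) ^ α) d
  -- bounds on A and B
  have hA1 : 1 ≤ ∑ i, p i ^ α := by
    rw [← hp1]
    refine Finset.sum_le_sum fun i _ => ?_
    rcases eq_or_lt_of_le (hp0 i) with h0 | hpos
    · rw [← h0, Real.zero_rpow (ne_of_gt hα0)]
    · have hle1 : p i ≤ 1 := by
        rw [← hp1]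
        exact Finset.single_le_sum (fun j _ => hp0 j) (Finset.mem_univ i)
      calc p i = p i ^ (1:ℝ) := (Real.rpow_one _).symm
        _ ≤ p i ^ α := Real.rpow_le_rpow_of_exponent_ge hpos hle1 hα1.le
  have hB1 : 1 ≤ ∑ j, q j ^ α := by
    rw [← hq1]
    refine Finset.sum_le_sum fun j _ => ?_
    rcases eq_or_lt_of_le (hq0 j) with h0 | hpos
    · rw [← h0, Real.zero_rpow (ne_of_gt hα0)]
    · have hle1 : q j ≤ 1 := by
        rw [← hq1]
        exact Finset.single_le_sum (fun i _ => hq0 i) (Finset.mem_univ j)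
      calc q j = q j ^ (1:ℝ) := (Real.rpow_one _).symm
        _ ≤ q j ^ α := Real.rpow_le_rpow_of_exponent_ge hpos hle1 hα1.le
  have hC0 : 0 ≤ ∑ k, Wvec U k ^ α :=
    Finset.sum_nonneg fun k _ => Real.rpow_nonneg (hW0 k) α
  have hCAB : (∑ k, Wvec U k ^ α) ≤ (∑ i, p i ^ α) * ∑ j, q j ^ α := by
    rw [hC_eq]
    nlinarith [hAB, hA1, hB1]
  -- final logarithmic step
  show renyiEntropy α p + renyiEntropy α q ≥ renyiEntropy α (Wvec U)
  unfold renyiEntropy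
  rw [ge_iff_le, ← mul_add]
  refine mul_le_mul_of_nonneg_left ?_ (le_of_lt (by positivity))
  rcases eq_or_lt_of_le hC0 with h0 | hCpos
  · rw [← h0, Real.log_zero]
    exact add_nonneg (Real.log_nonneg hA1) (Real.log_nonneg hB1)
  · calc Real.log (∑ k, Wvec U k ^ α)
        ≤ Real.log ((∑ i, p i ^ α) * ∑ j, q j ^ α) := Real.log_le_log hCpos hCAB
      _ = Real.log (∑ i, p i ^ α) + Real.log (∑ j, q j ^ α) :=
          Real.log_mul (by linarith) (by linarith)
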